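/- Let ι : ℚ(q)[[t]] → ℚ((q))[[t]] be the map applying to each t-coefficient the Laurent expansion at q = 0. Define ℘(q⁻¹t, t) ∈ ℚ((q))[[t]] as the series obtained from the defining expansion of ℘ by substituting q ↦ q⁻¹t and regrouping by powers of t, namely ℘(q⁻¹t,t) = −1/12 + ∑_{j≥1} (−1)^{j−1} j q^{−j} t^{j} − ∑_{d≥1} ∑_{m|d} m·((−1)^m q^{−m} t^{d+m} − 2 t^{d} + (−1)^m q^{m} t^{d−m}), where for each power of t the sum of contributions converges in ℚ((q)) (the only infinite regrouping occurs in the coefficient of t⁰, where it is the convergent series ∑_{m≥1} m(−1)^m q^m ∈ ℚ[[q]], coming from the terms with d = m). Then ℘(q⁻¹t, t) = ι(℘(q,t)). -/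

import Mathlib

noncomputable section

open PowerSeries

/-- The field `ℚ(q)` of rational functions in `q`. -/
abbrev K : Type := RatFunc ℚ

/-- The variable `q ∈ ℚ(q)`. -/
def q : K := RatFunc.X

/-- `s = q + 2 + q⁻¹`. -/
def s : K := q + 2 + q⁻¹

/-- The `m`-th factor of the infinite product defining `φ_{-2,1}`. -/
def phiFactor (m : ℕ) : PowerSeries K :=
  (1 + C q * X ^ m) ^ 2 * (1 + C q⁻¹ * X ^ m) ^ 2 * ((1 - X ^ m)⁻¹) ^ 4

/-- The infinite product `∏_{m ≥ 1} (1 + q tᵐ)² (1 + q⁻¹ tᵐ)² (1 - tᵐ)⁻⁴`, convergent in the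
`t`-adic topology: the coefficient of `t^d` equals that of any partial product
`∏_{m=1}^{N}` with `N ≥ d`, since the `m`-th factor is `≡ 1 mod t^m`. -/
def phiProd : PowerSeries K :=
  PowerSeries.mk fun d => coeff d (∏ m ∈ Finset.Icc 1 d, phiFactor m)

/-- The weak Jacobi form `φ_{-2,1}(q,t)` of weight `-2` and index `1`. -/
def phi : PowerSeries K := C s * phiProd

/-- The Weierstraß elliptic function expansion
`℘(q,t) = -1/12 + q/(1+q)² - ∑_{d≥1} (∑_{m|d} m((-q)^m - 2 + (-q)^{-m})) t^d`. -/
def wp : PowerSeries K :=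
  PowerSeries.mk fun d =>
    if d = 0 then -(1 / 12) + q / (1 + q) ^ 2
    else -∑ m ∈ d.divisors, (m : K) * ((-q) ^ (m : ℤ) - 2 + (-q) ^ (-(m : ℤ)))

/-- The weak Jacobi form `φ_{0,1}(q,t) = 12 ℘(q,t) φ_{-2,1}(q,t)` of weight `0` and index `1`. -/
def phi01 : PowerSeries K := 12 * wp * phi


/-- The `t^e`-coefficient (an element of `ℚ((q))`) of the series `℘(q⁻¹t, t)`, obtained from
the defining expansion of `℘` by substituting `q ↦ q⁻¹t` and regrouping by powers of `t`:
`℘(q⁻¹t,t) = -1/12 + ∑_{j≥1} (-1)^{j-1} j q^{-j} t^j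
  - ∑_{d≥1} ∑_{m|d} m((-1)^m q^{-m} t^{d+m} - 2 t^d + (-1)^m q^m t^{d-m})`.
For `e = 0` the only contributions are `-1/12` and the infinite convergent series
`-∑_{m≥1} (-1)^m m q^m` (from the terms with `d = m`); for `e ≥ 1` the contributions are
`(-1)^{e-1} e q^{-e}` together with the finitely many terms with `d + m = e` (i.e. `m` a proper
divisor of `e`), `d = e` (all `m | e`), and `d - m = e` (i.e. `m | e`). -/
def wpSubCoeff (e : ℕ) : LaurentSeries ℚ :=
  if e = 0 then
    -(1 / 12) - HahnSeries.ofPowerSeries ℤ ℚ (PowerSeries.mk fun m => (-1 : ℚ) ^ m * m)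
  else
    HahnSeries.single (-(e : ℤ)) ((-1 : ℚ) ^ (e - 1) * e)
      - ((∑ m ∈ e.properDivisors, HahnSeries.single (-(m : ℤ)) ((-1 : ℚ) ^ m * m))
          - HahnSeries.C (∑ m ∈ e.divisors, 2 * (m : ℚ))
          + ∑ m ∈ e.divisors, HahnSeries.single ((m : ℤ)) ((-1 : ℚ) ^ m * m))

/-- The series `℘(q⁻¹t, t) ∈ ℚ((q))[[t]]`. -/
def wpSub : PowerSeries (LaurentSeries ℚ) := PowerSeries.mk wpSubCoeff

/-- Elliptic invariance of the Weierstraß function: `℘(q⁻¹t, t) = ι(℘(q, t))`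
in `ℚ((q))[[t]]`, where `ι` applies to each `t`-coefficient the Laurent expansion at `q = 0`. -/
abbrev L : Type := LaurentSeries ℚ

lemma coeff_mul_one_add_X (f : PowerSeries ℚ) (n : ℕ) :
    coeff n (f * (1 + X)) = coeff n f + if n = 0 then 0 else coeff (n-1) f := by
  rw [mul_add, mul_one, map_add]
  cases n with
  | zero => simp
  | succ n => simp [coeff_succ_mul_X]

lemma key : (PowerSeries.mk fun m => (-1 : ℚ) ^ m * m) * (1 + X) ^ 2 = -X := by
  have h1 : (PowerSeries.mk fun m => (-1 : ℚ) ^ m * m) * (1 + X)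
      = PowerSeries.mk fun m => if m = 0 then 0 else (-1 : ℚ) ^ m := by
    ext n
    rw [coeff_mul_one_add_X, coeff_mk, coeff_mk, coeff_mk]
    cases n with
    | zero => simp
    | succ n =>
      simp only [Nat.succ_ne_zero, if_false, Nat.add_sub_cancel]
      push_cast
      ring
  rw [sq, ← mul_assoc, h1]
  ext n
  rw [coeff_mul_one_add_X, coeff_mk]
  match n with
  | 0 => simp
  | 1 => simp
  | (n+2) => rw [coeff_mk]; simp [coeff_X, pow_succ]

lemma single_neg' (a : ℤ) (r : ℚ) :
    HahnSeries.single a (-r) = -(HahnSeries.single a r : L) :=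
  map_neg (HahnSeries.single.addMonoidHom a) r

lemma single_natCast_mul (m : ℕ) (a : ℤ) (r : ℚ) :
    (m : L) * HahnSeries.single a r = HahnSeries.single a (m * r) := by
  have : (m : L) = HahnSeries.single 0 (m : ℚ) := by
    rw [← map_natCast (HahnSeries.C : ℚ →+* L) m]; rfl
  rw [this, HahnSeries.single_mul_single, zero_add]

lemma fq : (@algebraMap (RatFunc ℚ) (LaurentSeries ℚ) _ _ (RatFunc.liftAlgebra ℚ (LaurentSeries ℚ))) q = HahnSeries.single 1 1 := by
  show ((q : K) : L) = HahnSeries.single 1 1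
  rw [q, RatFunc.coe_X]

lemma one_add_XL_ne : (1 + HahnSeries.single 1 1 : L) ≠ 0 := by
  intro h
  have := congrArg (fun x : L => x.coeff 0) h
  simp [HahnSeries.coeff_single] at this

lemma laurent_key :
    (HahnSeries.single 1 1 : L) / (1 + HahnSeries.single 1 1) ^ 2
      = -(HahnSeries.ofPowerSeries ℤ ℚ (PowerSeries.mk fun m => (-1 : ℚ) ^ m * m)) := by
  rw [div_eq_iff (pow_ne_zero 2 one_add_XL_ne)]
  have := congrArg (HahnSeries.ofPowerSeries ℤ ℚ) key
  rw [map_mul, map_pow, map_add, map_one, map_neg, HahnSeries.ofPowerSeries_X] at this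
  linear_combination this

lemma neg_q_zpow (m : ℕ) :
    ((@algebraMap (RatFunc ℚ) (LaurentSeries ℚ) _ _ (RatFunc.liftAlgebra ℚ (LaurentSeries ℚ))) (-q)) ^ (m : ℤ)
      = HahnSeries.single (m : ℤ) ((-1 : ℚ) ^ m) := by
  rw [map_neg, fq, ← single_neg', zpow_natCast, HahnSeries.single_pow]
  norm_num

lemma neg_q_zpow_neg (m : ℕ) :
    ((@algebraMap (RatFunc ℚ) (LaurentSeries ℚ) _ _ (RatFunc.liftAlgebra ℚ (LaurentSeries ℚ))) (-q)) ^ (-(m : ℤ))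
      = HahnSeries.single (-(m : ℤ)) ((-1 : ℚ) ^ m) := by
  rw [zpow_neg, neg_q_zpow,
    HahnSeries.inv_single (m : ℤ) ((-1 : ℚ) ^ m)]
  rw [← inv_pow, inv_neg, inv_one]

theorem wp_elliptic_invariance :
    wpSub = PowerSeries.map (@algebraMap (RatFunc ℚ) (LaurentSeries ℚ) _ _ (RatFunc.liftAlgebra ℚ (LaurentSeries ℚ))) wp := by
  set f := (@algebraMap (RatFunc ℚ) (LaurentSeries ℚ) _ _ (RatFunc.liftAlgebra ℚ (LaurentSeries ℚ))) with hf
  apply PowerSeries.ext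
  intro e
  rw [wpSub, coeff_mk, PowerSeries.coeff_map, wp, coeff_mk, wpSubCoeff]
  by_cases he : e = 0
  · simp only [he, if_true]
    rw [map_add, map_neg, map_div₀, map_div₀, map_one, map_ofNat, map_pow, map_add, map_one, fq,
      laurent_key]
    ring
  · simp only [he, if_false]
    rw [map_neg, map_sum f]
    rw [Finset.sum_congr rfl (fun m (hm : m ∈ e.divisors) =>
      show f ((m : K) * ((-q) ^ (m : ℤ) - 2 + (-q) ^ (-(m : ℤ))))
          = HahnSeries.single (m : ℤ) ((-1 : ℚ) ^ m * m) - 2 * (m : L)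
            + HahnSeries.single (-(m : ℤ)) ((-1 : ℚ) ^ m * m) by
        rw [map_mul, map_natCast, map_add, map_sub, map_ofNat, map_zpow₀, map_zpow₀,
          neg_q_zpow, neg_q_zpow_neg, mul_add, mul_sub, single_natCast_mul, single_natCast_mul,
          mul_comm ((m : ℚ)), mul_comm ((m : L))])]
    have hdiv : ∀ g : ℕ → L, ∑ m ∈ e.divisors, g m = (∑ m ∈ e.properDivisors, g m) + g e := by
      intro g
      rw [← Nat.cons_self_properDivisors he, Finset.sum_cons, add_comm]
    rw [Finset.sum_add_distrib, Finset.sum_sub_distrib]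
    rw [hdiv (fun m => HahnSeries.single (-(m : ℤ)) ((-1 : ℚ) ^ m * m))]
    have hsingle : HahnSeries.single (-(e : ℤ)) ((-1 : ℚ) ^ (e - 1) * e)
        = -HahnSeries.single (-(e : ℤ)) ((-1 : ℚ) ^ e * e) := by
      rw [← single_neg']
      congr 1
      obtain ⟨k, rfl⟩ := Nat.exists_eq_succ_of_ne_zero he
      simp [pow_succ]
    have hC : HahnSeries.C (∑ m ∈ e.divisors, 2 * (m : ℚ))
        = ∑ m ∈ e.divisors, 2 * (m : L) := by
      rw [map_sum]
      exact Finset.sum_congr rfl fun m _ => by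
        rw [map_mul, map_ofNat, map_natCast]
    rw [hsingle, hC]
    abel

end
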